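/- arXiv:2305.00482 — 2 statements merged into one kernel-verified Lean document; each statement's English description precedes it below -/
import Mathlib

section
/- Let (H,B₁,B₂) be a Rota-Baxter system of Hopf algebras with cocycle σ. Then σ is idempotent: σ∘σ = σ. -/
open TensorProduct Coalgebra HopfAlgebra LinearMap

variable {F : Type*} [Field F] {H : Type*} [Ring H] [HopfAlgebra F H]

/-- The descendent operation `a ⊗ b ↦ B₁(a₁) b S(B₂(a₂))` as a linear map on `H ⊗ H`. -/
noncomputable def circL (B₁ B₂ : H →ₗ[F] H) : H ⊗[F] H →ₗ[F] H :=
  (LinearMap.mul' F H)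
    ∘ₗ (TensorProduct.map ((LinearMap.mul' F H) ∘ₗ TensorProduct.map B₁ LinearMap.id)
        ((antipode (R := F)) ∘ₗ B₂))
    ∘ₗ (TensorProduct.assoc F H H H).symm.toLinearMap
    ∘ₗ (TensorProduct.map LinearMap.id (TensorProduct.comm F H H).toLinearMap)
    ∘ₗ (TensorProduct.assoc F H H H).toLinearMap
    ∘ₗ (TensorProduct.map Coalgebra.comul LinearMap.id)

/-- The descendent operation `a ∘ b = B₁(a₁) b S(B₂(a₂))`. -/
noncomputable def circ (B₁ B₂ : H →ₗ[F] H) (a b : H) : H := circL B₁ B₂ (a ⊗ₜ[F] b)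

/-- The cocycle `σ = B₁ ∗ (S ∘ B₂)`, i.e. `σ(a) = B₁(a₁) S(B₂(a₂))`. -/
noncomputable def cocycleL (B₁ B₂ : H →ₗ[F] H) : H →ₗ[F] H :=
  (LinearMap.mul' F H) ∘ₗ (TensorProduct.map B₁ ((antipode (R := F)) ∘ₗ B₂)) ∘ₗ Coalgebra.comul

/-- `(H, B₁, B₂)` is a Rota-Baxter system of Hopf algebras: `B₁, B₂` are coalgebra
homomorphisms sending `1` to `1` such that `Bᵢ(a)Bᵢ(b) = Bᵢ(B₁(a₁) b S(B₂(a₂)))`. -/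
noncomputable def IsRBSystem (B₁ B₂ : H →ₗ[F] H) : Prop :=
  (Coalgebra.comul ∘ₗ B₁ = TensorProduct.map B₁ B₁ ∘ₗ Coalgebra.comul) ∧
  (Coalgebra.counit ∘ₗ B₁ = Coalgebra.counit (R := F)) ∧
  (Coalgebra.comul ∘ₗ B₂ = TensorProduct.map B₂ B₂ ∘ₗ Coalgebra.comul) ∧
  (Coalgebra.counit ∘ₗ B₂ = Coalgebra.counit (R := F)) ∧
  B₁ 1 = 1 ∧ B₂ 1 = 1 ∧
  (∀ a b : H, B₁ a * B₁ b = B₁ (circ B₁ B₂ a b)) ∧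
  (∀ a b : H, B₂ a * B₂ b = B₂ (circ B₁ B₂ a b))

namespace RBAux
variable {F : Type*} [Field F] {H : Type*} [Ring H] [HopfAlgebra F H]

section Conv
variable {A : Type*} [Ring A] [Algebra F A]

/-- Convolution product. -/
noncomputable def conv (f g : H →ₗ[F] A) : H →ₗ[F] A :=
  LinearMap.mul' F A ∘ₗ TensorProduct.map f g ∘ₗ Coalgebra.comul

lemma conv_repr (f g : H →ₗ[F] A) {a : H} (r : Coalgebra.Repr F a (H × H)) :
    conv f g a = ∑ i ∈ r.index, f (r.left i) * g (r.right i) := by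
  simp [conv, ← r.eq, map_sum]

lemma sum_counit_smul {a : H} (r : Coalgebra.Repr F a (H × H)) :
    ∑ i ∈ r.index, (Coalgebra.counit (R := F) (r.left i)) • r.right i = a := by
  have h := congrArg (TensorProduct.lid F H) (Coalgebra.sum_counit_tmul_eq r)
  rw [map_sum] at h
  simp only [lid_tmul, one_smul] at h
  exact h

lemma sum_smul_counit {a : H} (r : Coalgebra.Repr F a (H × H)) :
    ∑ i ∈ r.index, (Coalgebra.counit (R := F) (r.right i)) • r.left i = a := by
  have h := congrArg (TensorProduct.rid F H) (Coalgebra.sum_tmul_counit_eq r)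
  rw [map_sum] at h
  simp only [rid_tmul, one_smul] at h
  exact h

/-- the unit of the convolution algebra -/
noncomputable def cunit : H →ₗ[F] A := Algebra.linearMap F A ∘ₗ Coalgebra.counit

lemma conv_cunit_left (f : H →ₗ[F] A) : conv cunit f = f := by
  ext a
  rw [conv_repr _ _ (ℛ F a)]
  simp only [cunit, coe_comp, Function.comp_apply, Algebra.linearMap_apply, ← Algebra.smul_def]
  calc ∑ i ∈ (ℛ F a).index,
        Coalgebra.counit (R := F) ((ℛ F a).left i) • f ((ℛ F a).right i)
      = ∑ i ∈ (ℛ F a).index,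
        f (Coalgebra.counit (R := F) ((ℛ F a).left i) • (ℛ F a).right i) := by
        simp [map_smul]
    _ = f a := by rw [← map_sum, sum_counit_smul]

lemma conv_cunit_right (f : H →ₗ[F] A) : conv f cunit = f := by
  ext a
  rw [conv_repr _ _ (ℛ F a)]
  simp only [cunit, coe_comp, Function.comp_apply, Algebra.linearMap_apply]
  have : ∀ i ∈ (ℛ F a).index, f ((ℛ F a).left i) * algebraMap F A (Coalgebra.counit ((ℛ F a).right i))
      = f ((Coalgebra.counit (R := F) ((ℛ F a).right i)) • (ℛ F a).left i) := by
    intro i _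
    rw [map_smul, ← Algebra.commutes, ← Algebra.smul_def]
  rw [Finset.sum_congr rfl this, ← map_sum, sum_smul_counit]

end Conv

set_option synthInstance.maxHeartbeats 400000 in
/-- Coassociativity in `Repr` form. -/
lemma star_eq {a : H} (r : Coalgebra.Repr F a (H × H)) (s : ∀ i : H × H, Coalgebra.Repr F (r.right i) (H × H)) :
    ∑ i ∈ r.index, (Coalgebra.comul (R := F) (r.left i)) ⊗ₜ[F] (r.right i)
      = ∑ i ∈ r.index, ∑ j ∈ (s i).index,
          ((r.left i) ⊗ₜ[F] ((s i).left j)) ⊗ₜ[F] ((s i).right j) := by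
  apply (TensorProduct.assoc F H H H).injective
  have lhs : ∑ i ∈ r.index, (Coalgebra.comul (R := F) (r.left i)) ⊗ₜ[F] (r.right i)
      = (Coalgebra.comul (R := F)).rTensor H (Coalgebra.comul a) := by
    rw [← r.eq, map_sum]
    simp [rTensor_tmul]
  rw [lhs, Coalgebra.coassoc_apply, ← r.eq, map_sum, map_sum]
  refine Finset.sum_congr rfl fun i _ => ?_
  rw [lTensor_tmul, ← (s i).eq, map_sum, tmul_sum]
  simp [assoc_tmul]

section Conv
variable {A : Type*} [Ring A] [Algebra F A]

lemma conv_assoc (f g h : H →ₗ[F] A) : conv (conv f g) h = conv f (conv g h) := by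
  ext a
  set r := ℛ F a with hr
  set s : ∀ i : H × H, Coalgebra.Repr F (r.right i) (H × H) := fun i => ℛ F (r.right i) with hs
  set Λ : (H ⊗[F] H) ⊗[F] H →ₗ[F] A :=
    LinearMap.mul' F A ∘ₗ TensorProduct.map (LinearMap.mul' F A ∘ₗ TensorProduct.map f g) h
    with hΛ
  have key : ∀ (w : H ⊗[F] H) (y : H), Λ (w ⊗ₜ[F] y)
      = LinearMap.mul' F A (TensorProduct.map f g w) * h y := by
    intro w y; simp [hΛ]
  calc conv (conv f g) h a
      = ∑ i ∈ r.index, conv f g (r.left i) * h (r.right i) := conv_repr _ _ r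
    _ = Λ (∑ i ∈ r.index, (Coalgebra.comul (R := F) (r.left i)) ⊗ₜ[F] (r.right i)) := by
        rw [map_sum]
        exact Finset.sum_congr rfl fun i _ => (key _ _).symm
    _ = Λ (∑ i ∈ r.index, ∑ j ∈ (s i).index,
          ((r.left i) ⊗ₜ[F] ((s i).left j)) ⊗ₜ[F] ((s i).right j)) := by rw [star_eq r s]
    _ = ∑ i ∈ r.index, ∑ j ∈ (s i).index,
          f (r.left i) * (g ((s i).left j) * h ((s i).right j)) := by
        rw [map_sum]
        refine Finset.sum_congr rfl fun i _ => ?_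
        rw [map_sum]
        refine Finset.sum_congr rfl fun j _ => ?_
        simp [hΛ, mul_assoc]
    _ = ∑ i ∈ r.index, f (r.left i) * conv g h (r.right i) := by
        refine Finset.sum_congr rfl fun i _ => ?_
        rw [conv_repr _ _ (s i), Finset.mul_sum]
    _ = conv f (conv g h) a := (conv_repr _ _ r).symm

lemma conv_inv_unique (f g h : H →ₗ[F] A) (hfh : conv f h = cunit) (hhg : conv h g = cunit) :
    f = g := by
  have := conv_assoc f h g
  rw [hfh, hhg, conv_cunit_left, conv_cunit_right] at this
  exact this.symm

end Conv
section Antipode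

local notation "S" => antipode (R := F) (A := H)
local notation "Δ" => Coalgebra.comul (R := F) (A := H)

lemma conv_comulS :
    conv ((Δ) ∘ₗ (S)) (Δ) = (cunit : H →ₗ[F] H ⊗[F] H) := by
  ext a
  rw [conv_repr _ _ (ℛ F a)]
  have : ∀ i ∈ (ℛ F a).index,
      ((Δ) ∘ₗ (S)) ((ℛ F a).left i) * (Δ) ((ℛ F a).right i)
      = (Δ) ((S) ((ℛ F a).left i) * (ℛ F a).right i) := by
    intro i _
    rw [Bialgebra.comul_mul]
    rfl
  rw [Finset.sum_congr rfl this, ← map_sum, HopfAlgebra.sum_antipode_mul_eq_smul, map_smul,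
    Bialgebra.comul_one]
  simp [cunit, Algebra.algebraMap_eq_smul_one]

lemma conv_comul_SS (hcc : ∀ a : H, (TensorProduct.comm F H H) (Coalgebra.comul a) = Coalgebra.comul a) :
    conv (Δ) (TensorProduct.map (S) (S) ∘ₗ (Δ)) = (cunit : H →ₗ[F] H ⊗[F] H) := by
  ext a
  set g : H →ₗ[F] H ⊗[F] H := TensorProduct.map (S) (S) ∘ₗ (Δ) with hg
  set r := ℛ F a with hr
  set s : ∀ i : H × H, Coalgebra.Repr F (r.right i) (H × H) := fun i => ℛ F (r.right i) with hs
  set t : ∀ (i : H × H) (j : H × H), Coalgebra.Repr F ((s i).right j) (H × H) :=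
    fun i j => ℛ F ((s i).right j) with ht
  set Θ : (H ⊗[F] H) ⊗[F] H →ₗ[F] H ⊗[F] H :=
    LinearMap.mul' F (H ⊗[F] H) ∘ₗ LinearMap.lTensor (H ⊗[F] H) g with hΘ
  set Ξ : H → ((H ⊗[F] H) ⊗[F] H →ₗ[F] H ⊗[F] H) := fun x =>
    (TensorProduct.map ((LinearMap.mulLeft F x) ∘ₗ (S))
        (LinearMap.mul' F H ∘ₗ LinearMap.lTensor H (S)))
      ∘ₗ (TensorProduct.comm F (H ⊗[F] H) H).toLinearMap with hΞ
  have comulv : ∀ (i : H × H) (j : H × H),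
      (Δ) ((s i).right j) = ∑ k ∈ (t i j).index, (t i j).right k ⊗ₜ[F] (t i j).left k := by
    intro i j
    have h := hcc ((s i).right j)
    rw [← (t i j).eq, map_sum] at h
    simp only [comm_tmul] at h
    exact (t i j).eq.symm.trans h.symm
  calc conv (Δ) g a
      = ∑ i ∈ r.index, (Δ) (r.left i) * g (r.right i) := conv_repr _ _ r
    _ = Θ (∑ i ∈ r.index, ((Δ) (r.left i)) ⊗ₜ[F] (r.right i)) := by
        rw [map_sum]
        refine Finset.sum_congr rfl fun i _ => ?_
        simp [hΘ]
    _ = ∑ i ∈ r.index, ∑ j ∈ (s i).index,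
          (r.left i ⊗ₜ[F] (s i).left j) * g ((s i).right j) := by
        rw [star_eq r s, map_sum]
        refine Finset.sum_congr rfl fun i _ => ?_
        rw [map_sum]
        refine Finset.sum_congr rfl fun j _ => ?_
        simp [hΘ]
    _ = ∑ i ∈ r.index, ∑ j ∈ (s i).index, ∑ k ∈ (t i j).index,
          (r.left i * (S) ((t i j).right k)) ⊗ₜ[F]
            ((s i).left j * (S) ((t i j).left k)) := by
        refine Finset.sum_congr rfl fun i _ => ?_
        refine Finset.sum_congr rfl fun j _ => ?_
        rw [hg]
        simp only [coe_comp, Function.comp_apply, comulv i j, map_sum, map_tmul,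
          Finset.mul_sum]
        exact Finset.sum_congr rfl fun k _ => Algebra.TensorProduct.tmul_mul_tmul _ _ _ _
    _ = ∑ i ∈ r.index, ∑ j ∈ (s i).index, Ξ (r.left i) (((Δ) ((s i).left j)) ⊗ₜ[F] ((s i).right j)) := by
        refine Finset.sum_congr rfl fun i _ => ?_
        rw [← map_sum, star_eq (s i) (t i), map_sum]
        refine Finset.sum_congr rfl fun j _ => ?_
        rw [map_sum]
        refine Finset.sum_congr rfl fun k _ => ?_
        simp [hΞ]
    _ = ∑ i ∈ r.index, ∑ j ∈ (s i).index,
          (Coalgebra.counit (R := F) ((s i).left j)) •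
            ((r.left i * (S) ((s i).right j)) ⊗ₜ[F] (1 : H)) := by
        refine Finset.sum_congr rfl fun i _ => ?_
        refine Finset.sum_congr rfl fun j _ => ?_
        have hmul : LinearMap.mul' F H ((LinearMap.lTensor H (S)) ((Δ) ((s i).left j)))
            = Coalgebra.counit (R := F) ((s i).left j) • (1 : H) := by
          rw [HopfAlgebra.mul_antipode_lTensor_comul_apply, Algebra.smul_def, mul_one]
        simp only [hΞ, coe_comp, Function.comp_apply, LinearEquiv.coe_coe, comm_tmul, map_tmul,
          hmul, tmul_smul]
        rfl
    _ = ∑ i ∈ r.index, (r.left i * (S) (r.right i)) ⊗ₜ[F] (1 : H) := by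
        refine Finset.sum_congr rfl fun i _ => ?_
        have : ∀ j ∈ (s i).index,
            (Coalgebra.counit (R := F) ((s i).left j)) •
              ((r.left i * (S) ((s i).right j)) ⊗ₜ[F] (1 : H))
            = (r.left i * (S) ((Coalgebra.counit (R := F) ((s i).left j)) • (s i).right j))
                ⊗ₜ[F] (1 : H) := by
          intro j _
          rw [map_smul, mul_smul_comm, smul_tmul']
        rw [Finset.sum_congr rfl this, ← sum_tmul, ← Finset.mul_sum, ← map_sum,
          sum_counit_smul (s i)]
    _ = cunit a := by
        rw [← sum_tmul, HopfAlgebra.sum_mul_antipode_eq_smul r]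
        simp [cunit, Algebra.TensorProduct.one_def, Algebra.algebraMap_eq_smul_one, smul_tmul']

lemma comul_comp_antipode
    (hcc : ∀ a : H, (TensorProduct.comm F H H) (Coalgebra.comul a) = Coalgebra.comul a) :
    (Δ) ∘ₗ (S) = TensorProduct.map (S) (S) ∘ₗ (Δ) :=
  conv_inv_unique _ _ (Δ) conv_comulS (conv_comul_SS hcc)

end Antipode

section ConvCoalg

local notation "Δ" => Coalgebra.comul (R := F) (A := H)

lemma repr_swap (hcc : ∀ a : H, (TensorProduct.comm F H H) (Coalgebra.comul a) = Coalgebra.comul a)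
    {b : H} (t : Coalgebra.Repr F b (H × H)) :
    (Δ) b = ∑ k ∈ t.index, t.right k ⊗ₜ[F] t.left k := by
  have h := hcc b
  rw [← t.eq, map_sum] at h
  simp only [comm_tmul] at h
  exact t.eq.symm.trans h.symm

lemma conv_coalg (hcc : ∀ a : H, (TensorProduct.comm F H H) (Coalgebra.comul a) = Coalgebra.comul a)
    (φ ψ : H →ₗ[F] H)
    (hφ : (Δ) ∘ₗ φ = TensorProduct.map φ φ ∘ₗ (Δ))
    (hψ : (Δ) ∘ₗ ψ = TensorProduct.map ψ ψ ∘ₗ (Δ)) :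
    (Δ) ∘ₗ conv φ ψ = TensorProduct.map (conv φ ψ) (conv φ ψ) ∘ₗ (Δ) := by
  ext a
  set T := conv φ ψ with hT
  set r := ℛ F a with hr
  set s : ∀ i : H × H, Coalgebra.Repr F (r.right i) (H × H) := fun i => ℛ F (r.right i) with hs
  set t : ∀ (i : H × H) (j : H × H), Coalgebra.Repr F ((s i).right j) (H × H) :=
    fun i j => ℛ F ((s i).right j) with ht
  set Λ : (H ⊗[F] H) ⊗[F] H →ₗ[F] H ⊗[F] H :=
    LinearMap.mul' F (H ⊗[F] H) ∘ₗ
      TensorProduct.map (TensorProduct.map φ φ) (TensorProduct.map ψ ψ ∘ₗ (Δ)) with hΛ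
  set Ξ : H → ((H ⊗[F] H) ⊗[F] H →ₗ[F] H ⊗[F] H) := fun x =>
    (TensorProduct.map ((LinearMap.mulLeft F (φ x)) ∘ₗ ψ)
        (LinearMap.mul' F H ∘ₗ TensorProduct.map φ ψ))
      ∘ₗ (TensorProduct.comm F (H ⊗[F] H) H).toLinearMap with hΞ
  set Γ : (H ⊗[F] H) ⊗[F] H →ₗ[F] H ⊗[F] H :=
    TensorProduct.map (LinearMap.mul' F H ∘ₗ TensorProduct.map φ ψ) T with hΓ
  simp only [coe_comp, Function.comp_apply]
  calc (Δ) (conv φ ψ a)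
      = ∑ i ∈ r.index, ((Δ) (φ (r.left i))) * ((Δ) (ψ (r.right i))) := by
        rw [conv_repr _ _ r, map_sum]
        exact Finset.sum_congr rfl fun i _ => Bialgebra.comul_mul _ _
    _ = Λ (∑ i ∈ r.index, ((Δ) (r.left i)) ⊗ₜ[F] (r.right i)) := by
        rw [map_sum]
        refine Finset.sum_congr rfl fun i _ => ?_
        have h1 := LinearMap.congr_fun hφ (r.left i)
        have h2 := LinearMap.congr_fun hψ (r.right i)
        simp only [coe_comp, Function.comp_apply] at h1 h2
        simp [hΛ, h1, h2]
    _ = ∑ i ∈ r.index, ∑ j ∈ (s i).index, ∑ k ∈ (t i j).index,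
          (φ (r.left i) * ψ ((t i j).right k)) ⊗ₜ[F]
            (φ ((s i).left j) * ψ ((t i j).left k)) := by
        rw [star_eq r s, map_sum]
        refine Finset.sum_congr rfl fun i _ => ?_
        rw [map_sum]
        refine Finset.sum_congr rfl fun j _ => ?_
        simp only [hΛ, coe_comp, Function.comp_apply, map_tmul,
          repr_swap hcc (t i j), map_sum, tmul_sum]
        exact Finset.sum_congr rfl fun k _ => by
          simp [Algebra.TensorProduct.tmul_mul_tmul]
    _ = ∑ i ∈ r.index, ∑ j ∈ (s i).index,
          Ξ (r.left i) (((Δ) ((s i).left j)) ⊗ₜ[F] ((s i).right j)) := by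
        refine Finset.sum_congr rfl fun i _ => ?_
        rw [← map_sum, star_eq (s i) (t i), map_sum]
        refine Finset.sum_congr rfl fun j _ => ?_
        rw [map_sum]
        refine Finset.sum_congr rfl fun k _ => ?_
        simp [hΞ]
    _ = ∑ i ∈ r.index, ∑ j ∈ (s i).index,
          (φ (r.left i) * ψ ((s i).right j)) ⊗ₜ[F] (T ((s i).left j)) := by
        refine Finset.sum_congr rfl fun i _ => ?_
        refine Finset.sum_congr rfl fun j _ => ?_
        simp only [hΞ, coe_comp, Function.comp_apply, LinearEquiv.coe_coe, comm_tmul, map_tmul]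
        rfl
    _ = ∑ i ∈ r.index, ∑ j ∈ (s i).index,
          (φ (r.left i) * ψ ((s i).left j)) ⊗ₜ[F] (T ((s i).right j)) := by
        refine Finset.sum_congr rfl fun i _ => ?_
        set C : H ⊗[F] H →ₗ[F] H ⊗[F] H :=
          TensorProduct.map ((LinearMap.mulLeft F (φ (r.left i))) ∘ₗ ψ) T with hC
        have e1 : ∑ j ∈ (s i).index,
            (φ (r.left i) * ψ ((s i).right j)) ⊗ₜ[F] (T ((s i).left j))
            = C ((Δ) (r.right i)) := by
          rw [repr_swap hcc (s i), map_sum]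
          exact Finset.sum_congr rfl fun j _ => by simp [hC]
        have e2 : C ((Δ) (r.right i)) = ∑ j ∈ (s i).index,
            (φ (r.left i) * ψ ((s i).left j)) ⊗ₜ[F] (T ((s i).right j)) := by
          rw [← (s i).eq, map_sum]
          exact Finset.sum_congr rfl fun j _ => by simp [hC]
        rw [e1, e2]
    _ = Γ (∑ i ∈ r.index, ((Δ) (r.left i)) ⊗ₜ[F] (r.right i)) := by
        rw [star_eq r s, map_sum]
        refine Finset.sum_congr rfl fun i _ => ?_
        rw [map_sum]
        refine Finset.sum_congr rfl fun j _ => ?_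
        simp [hΓ]
    _ = TensorProduct.map T T ((Δ) a) := by
        rw [map_sum, ← r.eq, map_sum]
        refine Finset.sum_congr rfl fun i _ => ?_
        simp only [hΓ, map_tmul, hT]
        rfl

end ConvCoalg
end RBAux

section Final
variable {F : Type*} [Field F] {H : Type*} [Ring H] [HopfAlgebra F H]

lemma cocycleL_eq_conv (B₁ B₂ : H →ₗ[F] H) :
    cocycleL B₁ B₂ = RBAux.conv B₁ ((antipode (R := F)) ∘ₗ B₂) := rfl

set_option synthInstance.maxHeartbeats 400000 in
lemma circ_one_eq (B₁ B₂ : H →ₗ[F] H) (a : H) :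
    circ B₁ B₂ a 1 = cocycleL B₁ B₂ a := by
  set r := ℛ F a with hr
  unfold circ circL cocycleL
  simp only [coe_comp, Function.comp_apply, LinearEquiv.coe_coe, map_tmul, id_coe, id_eq]
  rw [← r.eq]
  simp only [sum_tmul, map_sum, assoc_tmul, map_tmul, id_coe, id_eq, comm_tmul,
    assoc_symm_tmul, coe_comp, Function.comp_apply, mul'_apply, mul_one]
  refine Finset.sum_congr rfl fun i _ => ?_
  simp [mul'_apply]

lemma B₁_comp_cocycleL (B₁ B₂ : H →ₗ[F] H) (hRB : IsRBSystem B₁ B₂) :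
    B₁ ∘ₗ cocycleL B₁ B₂ = B₁ := by
  obtain ⟨h1, h2, h3, h4, h5, h6, h7, h8⟩ := hRB
  ext a
  rw [coe_comp, Function.comp_apply, ← circ_one_eq, ← h7, h5, mul_one]

lemma B₂_comp_cocycleL (B₁ B₂ : H →ₗ[F] H) (hRB : IsRBSystem B₁ B₂) :
    B₂ ∘ₗ cocycleL B₁ B₂ = B₂ := by
  obtain ⟨h1, h2, h3, h4, h5, h6, h7, h8⟩ := hRB
  ext a
  rw [coe_comp, Function.comp_apply, ← circ_one_eq, ← h8, h6, mul_one]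

end Final
/-- The cocycle `σ` of a Rota-Baxter system of Hopf algebras is idempotent. -/
theorem cocycle_idempotent
    (hcc : ∀ a : H, (TensorProduct.comm F H H) (Coalgebra.comul a) = Coalgebra.comul a)
    (B₁ B₂ : H →ₗ[F] H) (hRB : IsRBSystem B₁ B₂) :
    cocycleL B₁ B₂ ∘ₗ cocycleL B₁ B₂ = cocycleL B₁ B₂ := by
  set ψ : H →ₗ[F] H := (antipode (R := F)) ∘ₗ B₂ with hψdef
  have hψ : Coalgebra.comul ∘ₗ ψ = TensorProduct.map ψ ψ ∘ₗ Coalgebra.comul (R := F) := by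
    ext a
    have h1 := LinearMap.congr_fun (RBAux.comul_comp_antipode (F := F) (H := H) hcc) (B₂ a)
    have h2 := LinearMap.congr_fun hRB.1 a  -- wrong: hRB.1 is about B₁
    have h3 := LinearMap.congr_fun hRB.2.2.1 a
    simp only [coe_comp, Function.comp_apply] at h1 h3 ⊢
    rw [hψdef]
    simp only [coe_comp, Function.comp_apply]
    rw [h1, h3, ← Function.comp_apply (f := TensorProduct.map (antipode (R := F)) (antipode F))
      (g := TensorProduct.map B₂ B₂), ← coe_comp, ← TensorProduct.map_comp]
  have hσ : Coalgebra.comul ∘ₗ cocycleL B₁ B₂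
      = TensorProduct.map (cocycleL B₁ B₂) (cocycleL B₁ B₂) ∘ₗ Coalgebra.comul (R := F) := by
    rw [cocycleL_eq_conv]
    exact RBAux.conv_coalg hcc B₁ ψ hRB.1 hψ
  have hB₁ := B₁_comp_cocycleL B₁ B₂ hRB
  have hB₂ := B₂_comp_cocycleL B₁ B₂ hRB
  have hψσ : ψ ∘ₗ cocycleL B₁ B₂ = ψ := by
    rw [hψdef, LinearMap.comp_assoc, hB₂]
  ext a
  rw [coe_comp, Function.comp_apply]
  have h := LinearMap.congr_fun hσ a
  simp only [coe_comp, Function.comp_apply] at h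
  have key : cocycleL B₁ B₂ ((cocycleL B₁ B₂) a)
      = LinearMap.mul' F H (TensorProduct.map B₁ ψ
          (Coalgebra.comul (cocycleL B₁ B₂ a))) := rfl
  rw [key, h, ← Function.comp_apply (f := TensorProduct.map B₁ ψ)
      (g := TensorProduct.map (cocycleL B₁ B₂) (cocycleL B₁ B₂)), ← coe_comp,
    ← TensorProduct.map_comp, hB₁, hψσ]
  rfl
end

section
/- Let (H,B₁,B₂) be a Rota-Baxter system of Hopf algebras and define a∘b = B₁(a₁)bS(B₂(a₂)). Then ∘ is a coalgebra homomorphism H⊗H→H, i.e. Δ(a∘b) = (a₁∘b₁)⊗(a₂∘b₂) and ε(a∘b)=ε(a)ε(b) for all a,b∈H. -/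
open TensorProduct Coalgebra HopfAlgebra LinearMap

variable {F : Type*} [Field F] {H : Type*} [Ring H] [HopfAlgebra F H]

set_option synthInstance.maxHeartbeats 1000000 in
lemma circL_repr (B₁ B₂ : H →ₗ[F] H) {a : H} (b : H) (r : Coalgebra.Repr F a (H × H)) :
    circL B₁ B₂ (a ⊗ₜ[F] b)
      = ∑ i ∈ r.index, B₁ (r.left i) * b * antipode (R := F) (B₂ (r.right i)) := by
  simp only [circL, coe_comp, Function.comp_apply, LinearEquiv.coe_coe, map_tmul, id_coe, id_eq]
  rw [← r.eq, sum_tmul]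
  simp only [map_sum, assoc_tmul, map_tmul, comm_tmul, assoc_symm_tmul, id_coe, id_eq,
    LinearEquiv.coe_coe, coe_comp, Function.comp_apply, mul'_apply]


lemma sum_counit_smul' {a : H} (r : Coalgebra.Repr F a (H × H)) :
    ∑ i ∈ r.index, Coalgebra.counit (R := F) (r.left i) • r.right i = a := by
  have h := Coalgebra.sum_counit_tmul_eq r
  apply_fun (TensorProduct.lid F H) at h
  simp only [map_sum, lid_tmul, one_smul] at h
  exact h

lemma sum_smul_counit' {a : H} (r : Coalgebra.Repr F a (H × H)) :
    ∑ i ∈ r.index, Coalgebra.counit (R := F) (r.right i) • r.left i = a := by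
  have h := Coalgebra.sum_tmul_counit_eq r
  apply_fun (TensorProduct.rid F H) at h
  simp only [map_sum, rid_tmul, one_smul] at h
  exact h

lemma sum_counit_mul_counit' {a : H} (r : Coalgebra.Repr F a (H × H)) :
    ∑ i ∈ r.index, Coalgebra.counit (R := F) (r.left i) * Coalgebra.counit (R := F) (r.right i)
      = Coalgebra.counit (R := F) a := by
  have h := congrArg (Coalgebra.counit (R := F)) (sum_counit_smul' r)
  simpa [map_sum, smul_eq_mul] using h

lemma counit_antipode' (x : H) :
    Coalgebra.counit (R := F) (antipode (R := F) x) = Coalgebra.counit (R := F) x := by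
  have r := Coalgebra.Repr.arbitrary F x
  have h2 := congrArg (Coalgebra.counit (R := F)) (HopfAlgebra.sum_antipode_mul_eq_algebraMap_counit (R := F) r)
  simp only [map_sum, Bialgebra.counit_mul, Bialgebra.counit_algebraMap] at h2
  -- h2 : ∑ ε(S l) * ε(r) = ε x
  have h1 := congrArg (fun t => (TensorProduct.lid F F)
      (TensorProduct.map ((Coalgebra.counit (R := F)) ∘ₗ antipode (R := F)) (LinearMap.id (R := F) (M := F)) t))
      (Coalgebra.sum_tmul_counit_eq r)
  simp only [map_sum, map_tmul, coe_comp, Function.comp_apply, id_coe, id_eq, lid_tmul,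
    smul_eq_mul, mul_one] at h1
  -- h1 : ∑ ε(S l) * ε(r) = ε (S x)
  rw [← h1, h2]


section Conv
variable {A : Type*} [Semiring A] [Algebra F A]

/-- Convolution product of linear maps from a coalgebra to an algebra. -/
noncomputable def myconv (f g : H →ₗ[F] A) : H →ₗ[F] A :=
  LinearMap.mul' F A ∘ₗ TensorProduct.map f g ∘ₗ Coalgebra.comul

/-- Convolution unit. -/
noncomputable def myone : H →ₗ[F] A :=
  Algebra.linearMap F A ∘ₗ Coalgebra.counit

lemma myconv_repr (f g : H →ₗ[F] A) {a : H} (r : Coalgebra.Repr F a (H × H)) :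
    myconv f g a = ∑ i ∈ r.index, f (r.left i) * g (r.right i) := by
  simp only [myconv, coe_comp, Function.comp_apply]
  rw [← r.eq]
  simp [map_sum]

lemma coassoc3 {M N P : Type*} [AddCommMonoid M] [AddCommMonoid N] [AddCommMonoid P]
    [Module F M] [Module F N] [Module F P]
    (f : H →ₗ[F] M) (g : H →ₗ[F] N) (h : H →ₗ[F] P) {a : H} (r : Coalgebra.Repr F a (H × H))
    (rl : ∀ i : r.ι, Coalgebra.Repr F (r.left i) (H × H)) (rr : ∀ i : r.ι, Coalgebra.Repr F (r.right i) (H × H)) :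
    ∑ i ∈ r.index, ∑ j ∈ (rl i).index,
        f ((rl i).left j) ⊗ₜ[F] (g ((rl i).right j) ⊗ₜ[F] h (r.right i))
      = ∑ i ∈ r.index, ∑ j ∈ (rr i).index,
        f (r.left i) ⊗ₜ[F] (g ((rr i).left j) ⊗ₜ[F] h ((rr i).right j)) := by
  have h0 := Coalgebra.sum_tmul_tmul_eq r rl rr
  apply_fun TensorProduct.map f (TensorProduct.map g h) at h0
  simpa only [map_sum, map_tmul] using h0

lemma myconv_assoc (f g h : H →ₗ[F] A) : myconv (myconv f g) h = myconv f (myconv g h) := by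
  ext a
  have r := Coalgebra.Repr.arbitrary F a
  have rl : ∀ i : r.ι, Coalgebra.Repr F (r.left i) (H × H) := fun i => Coalgebra.Repr.arbitrary F _
  have rr : ∀ i : r.ι, Coalgebra.Repr F (r.right i) (H × H) := fun i => Coalgebra.Repr.arbitrary F _
  rw [myconv_repr (myconv f g) h r, myconv_repr f (myconv g h) r]
  have key := coassoc3 f g h r rl rr
  apply_fun (LinearMap.mul' F A ∘ₗ LinearMap.lTensor A (LinearMap.mul' F A)) at key
  simp only [map_sum, coe_comp, Function.comp_apply, lTensor_tmul, mul'_apply] at key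
  calc ∑ i ∈ r.index, myconv f g (r.left i) * h (r.right i)
      = ∑ i ∈ r.index, ∑ j ∈ (rl i).index,
          f ((rl i).left j) * (g ((rl i).right j) * h (r.right i)) := by
        refine Finset.sum_congr rfl fun i _ => ?_
        rw [myconv_repr f g (rl i), Finset.sum_mul]
        exact Finset.sum_congr rfl fun j _ => (mul_assoc _ _ _)
    _ = ∑ i ∈ r.index, ∑ j ∈ (rr i).index,
          f (r.left i) * (g ((rr i).left j) * h ((rr i).right j)) := key
    _ = ∑ i ∈ r.index, f (r.left i) * myconv g h (r.right i) := by
        refine Finset.sum_congr rfl fun i _ => ?_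
        rw [myconv_repr g h (rr i), Finset.mul_sum]

lemma myconv_one (f : H →ₗ[F] A) : myconv f myone = f := by
  ext a
  have r := Coalgebra.Repr.arbitrary F a
  rw [myconv_repr f myone r]
  have : ∀ i ∈ r.index, f (r.left i) * (myone (F:=F) (A:=A)) (r.right i)
      = Coalgebra.counit (R := F) (r.right i) • f (r.left i) := by
    intro i _
    simp [myone, Algebra.smul_def, Algebra.commutes]
  rw [Finset.sum_congr rfl this]
  calc ∑ i ∈ r.index, Coalgebra.counit (R := F) (r.right i) • f (r.left i)
      = ∑ i ∈ r.index, f (Coalgebra.counit (R := F) (r.right i) • r.left i) := by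
        simp [map_smul]
    _ = f (∑ i ∈ r.index, Coalgebra.counit (R := F) (r.right i) • r.left i) :=
        (map_sum f _ _).symm
    _ = f a := by rw [sum_smul_counit' r]

lemma myone_conv (f : H →ₗ[F] A) : myconv myone f = f := by
  ext a
  have r := Coalgebra.Repr.arbitrary F a
  rw [myconv_repr myone f r]
  have : ∀ i ∈ r.index, (myone (F:=F) (A:=A)) (r.left i) * f (r.right i)
      = Coalgebra.counit (R := F) (r.left i) • f (r.right i) := by
    intro i _
    simp [myone, Algebra.smul_def]
  rw [Finset.sum_congr rfl this]
  calc ∑ i ∈ r.index, Coalgebra.counit (R := F) (r.left i) • f (r.right i)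
      = ∑ i ∈ r.index, f (Coalgebra.counit (R := F) (r.left i) • r.right i) := by
        simp [map_smul]
    _ = f (∑ i ∈ r.index, Coalgebra.counit (R := F) (r.left i) • r.right i) :=
        (map_sum f _ _).symm
    _ = f a := by rw [sum_counit_smul' r]
lemma keyA {a : H} (r : Coalgebra.Repr F a (H × H))
    (rr : ∀ i : r.ι, Coalgebra.Repr F (r.right i) (H × H))
    (s : ∀ i : r.ι, ∀ q : (rr i).ι, Coalgebra.Repr F ((rr i).left q) (H × H)) :
    TensorProduct.map (Coalgebra.comul (R := F)) (Coalgebra.comul (R := F)) (Coalgebra.comul a)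
      = ∑ i ∈ r.index, ∑ q ∈ (rr i).index, ∑ m ∈ (s i q).index,
          (r.left i ⊗ₜ[F] (s i q).left m) ⊗ₜ[F] ((s i q).right m ⊗ₜ[F] (rr i).right q) := by
  have rl : ∀ i : r.ι, Coalgebra.Repr F (r.left i) (H × H) := fun i => Coalgebra.Repr.arbitrary F _
  have t : ∀ i : r.ι, ∀ q : (rr i).ι, Coalgebra.Repr F ((rr i).right q) (H × H) :=
    fun i q => Coalgebra.Repr.arbitrary F _
  apply (TensorProduct.assoc F H H (H ⊗[F] H)).injective
  have e1 : TensorProduct.map (Coalgebra.comul (R := F)) (Coalgebra.comul (R := F))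
        (Coalgebra.comul a)
      = ∑ i ∈ r.index, ∑ p ∈ (rl i).index,
          ((rl i).left p ⊗ₜ[F] (rl i).right p) ⊗ₜ[F] (Coalgebra.comul (R := F) (r.right i)) := by
    rw [← r.eq, map_sum]
    refine Finset.sum_congr rfl fun i _ => ?_
    rw [map_tmul, ← (rl i).eq, sum_tmul]
  rw [e1]
  rw [show ⇑(TensorProduct.assoc F H H (H ⊗[F] H))
      = ⇑(TensorProduct.assoc F H H (H ⊗[F] H)).toLinearMap from rfl]
  simp only [map_sum, LinearEquiv.coe_coe, assoc_tmul]
  calc ∑ i ∈ r.index, ∑ p ∈ (rl i).index,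
        (rl i).left p ⊗ₜ[F] ((rl i).right p ⊗ₜ[F] (Coalgebra.comul (R := F) (r.right i)))
      = ∑ i ∈ r.index, ∑ q ∈ (rr i).index,
        r.left i ⊗ₜ[F] ((rr i).left q ⊗ₜ[F] (Coalgebra.comul (R := F) ((rr i).right q))) := by
        have := coassoc3 (LinearMap.id (R := F) (M := H)) (LinearMap.id (R := F) (M := H))
          (Coalgebra.comul (R := F)) r rl rr
        simpa only [id_coe, id_eq] using this
    _ = ∑ i ∈ r.index, ∑ q ∈ (rr i).index, ∑ n ∈ (t i q).index,
        r.left i ⊗ₜ[F] ((rr i).left q ⊗ₜ[F] ((t i q).left n ⊗ₜ[F] (t i q).right n)) := by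
        refine Finset.sum_congr rfl fun i _ => Finset.sum_congr rfl fun q _ => ?_
        rw [← (t i q).eq, tmul_sum, tmul_sum]
    _ = ∑ i ∈ r.index, ∑ q ∈ (rr i).index, ∑ m ∈ (s i q).index,
        r.left i ⊗ₜ[F] ((s i q).left m ⊗ₜ[F] ((s i q).right m ⊗ₜ[F] (rr i).right q)) := by
        refine Finset.sum_congr rfl fun i _ => ?_
        have h0 := Coalgebra.sum_tmul_tmul_eq (rr i) (s i) (t i)
        calc ∑ q ∈ (rr i).index, ∑ n ∈ (t i q).index,
              r.left i ⊗ₜ[F] ((rr i).left q ⊗ₜ[F] ((t i q).left n ⊗ₜ[F] (t i q).right n))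
            = r.left i ⊗ₜ[F] (∑ q ∈ (rr i).index, ∑ n ∈ (t i q).index,
                (rr i).left q ⊗ₜ[F] ((t i q).left n ⊗ₜ[F] (t i q).right n)) := by
              rw [tmul_sum]
              exact Finset.sum_congr rfl fun q _ => by rw [tmul_sum]
          _ = r.left i ⊗ₜ[F] (∑ q ∈ (rr i).index, ∑ m ∈ (s i q).index,
                (s i q).left m ⊗ₜ[F] ((s i q).right m ⊗ₜ[F] (rr i).right q)) := by rw [← h0]
          _ = ∑ q ∈ (rr i).index, ∑ m ∈ (s i q).index,
              r.left i ⊗ₜ[F] ((s i q).left m ⊗ₜ[F] ((s i q).right m ⊗ₜ[F] (rr i).right q)) := by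
              rw [tmul_sum]
              exact Finset.sum_congr rfl fun q _ => by rw [tmul_sum]
lemma keyZ (hcc : ∀ x : H, (TensorProduct.comm F H H) (Coalgebra.comul x) = Coalgebra.comul x)
    (a : H) :
    TensorProduct.tensorTensorTensorComm F H H H H
        (TensorProduct.map (Coalgebra.comul (R := F)) (Coalgebra.comul (R := F))
          (Coalgebra.comul a))
      = TensorProduct.map (Coalgebra.comul (R := F)) (Coalgebra.comul (R := F))
          (Coalgebra.comul a) := by
  have r := Coalgebra.Repr.arbitrary F a
  have rr : ∀ i : r.ι, Coalgebra.Repr F (r.right i) (H × H) := fun i => Coalgebra.Repr.arbitrary F _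
  have s : ∀ i : r.ι, ∀ q : (rr i).ι, Coalgebra.Repr F ((rr i).left q) (H × H) :=
    fun i q => Coalgebra.Repr.arbitrary F _
  rw [keyA r rr s]
  rw [show ⇑(TensorProduct.tensorTensorTensorComm F H H H H)
      = ⇑(TensorProduct.tensorTensorTensorComm F H H H H).toLinearMap from rfl]
  simp only [map_sum, LinearEquiv.coe_coe, tensorTensorTensorComm_tmul]
  refine Finset.sum_congr rfl fun i _ => Finset.sum_congr rfl fun q _ => ?_
  have h2 := hcc ((rr i).left q)
  rw [← (s i q).eq] at h2
  simp only [map_sum, comm_tmul] at h2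
  -- h2 : ∑ m, sr ⊗ₜ sl = ∑ m, sl ⊗ₜ sr
  apply_fun (TensorProduct.map (TensorProduct.mk F H H (r.left i))
      ((TensorProduct.mk F H H).flip ((rr i).right q))) at h2
  simpa only [map_sum, map_tmul, TensorProduct.mk_apply, LinearMap.flip_apply] using h2
lemma myconv_comulS_comul :
    myconv ((Coalgebra.comul (R := F)) ∘ₗ antipode (R := F)) (Coalgebra.comul (R := F) (A := H))
      = myone := by
  ext a
  have r := Coalgebra.Repr.arbitrary F a
  rw [myconv_repr _ _ r]
  simp only [coe_comp, Function.comp_apply]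
  calc ∑ i ∈ r.index,
        Coalgebra.comul (R := F) (antipode (R := F) (r.left i)) * Coalgebra.comul (r.right i)
      = ∑ i ∈ r.index, Coalgebra.comul (R := F) (antipode (R := F) (r.left i) * r.right i) := by
        exact Finset.sum_congr rfl fun i _ => (Bialgebra.comul_mul _ _).symm
    _ = Coalgebra.comul (R := F) (∑ i ∈ r.index, antipode (R := F) (r.left i) * r.right i) := by
        rw [map_sum]
    _ = Coalgebra.comul (R := F) (algebraMap F H (Coalgebra.counit a)) := by
        rw [HopfAlgebra.sum_antipode_mul_eq_algebraMap_counit r]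
    _ = myone a := by
        rw [Bialgebra.comul_algebraMap]; rfl

lemma myconv_comul_SS (hcc : ∀ x : H,
      (TensorProduct.comm F H H) (Coalgebra.comul x) = Coalgebra.comul x) :
    myconv (Coalgebra.comul (R := F) (A := H))
      (TensorProduct.map (antipode (R := F)) (antipode (R := F)) ∘ₗ Coalgebra.comul)
      = myone := by
  ext a
  have r := Coalgebra.Repr.arbitrary F a
  have rr : ∀ i : r.ι, Coalgebra.Repr F (r.right i) (H × H) := fun i => Coalgebra.Repr.arbitrary F _
  have s : ∀ i : r.ι, ∀ q : (rr i).ι, Coalgebra.Repr F ((rr i).left q) (H × H) :=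
    fun i q => Coalgebra.Repr.arbitrary F _
  set Ξ : (H ⊗[F] H) ⊗[F] (H ⊗[F] H) →ₗ[F] H ⊗[F] H :=
    LinearMap.mul' F (H ⊗[F] H) ∘ₗ LinearMap.lTensor (H ⊗[F] H)
      (TensorProduct.map (antipode (R := F)) (antipode (R := F))
        ∘ₗ (TensorProduct.comm F H H).toLinearMap) with hΞ
  have e0 : myconv (Coalgebra.comul (R := F) (A := H))
      (TensorProduct.map (antipode (R := F)) (antipode (R := F)) ∘ₗ Coalgebra.comul) a
      = Ξ (TensorProduct.map (Coalgebra.comul (R := F)) (Coalgebra.comul (R := F))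
          (Coalgebra.comul a)) := by
    rw [myconv_repr _ _ r, ← r.eq]
    simp only [map_sum, map_tmul, hΞ, coe_comp, Function.comp_apply, lTensor_tmul,
      LinearEquiv.coe_coe, mul'_apply]
    exact Finset.sum_congr rfl fun i _ => by rw [hcc (r.right i)]
  rw [e0, keyA r rr s]
  simp only [map_sum, hΞ, coe_comp, Function.comp_apply, lTensor_tmul, LinearEquiv.coe_coe,
    comm_tmul, map_tmul, mul'_apply, Algebra.TensorProduct.tmul_mul_tmul]
  -- goal: ∑ i q m, (l i * S (rrr q)) ⊗ₜ (sl m * S (sr m)) = myone a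
  calc ∑ i ∈ r.index, ∑ q ∈ (rr i).index, ∑ m ∈ (s i q).index,
        (r.left i * antipode (R := F) ((rr i).right q))
          ⊗ₜ[F] ((s i q).left m * antipode (R := F) ((s i q).right m))
      = ∑ i ∈ r.index, ∑ q ∈ (rr i).index,
          (r.left i * antipode (R := F) ((rr i).right q))
            ⊗ₜ[F] algebraMap F H (Coalgebra.counit ((rr i).left q)) := by
        refine Finset.sum_congr rfl fun i _ => Finset.sum_congr rfl fun q _ => ?_
        rw [← tmul_sum, HopfAlgebra.sum_mul_antipode_eq_algebraMap_counit (s i q)]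
    _ = ∑ i ∈ r.index,
          (r.left i * antipode (R := F) (r.right i)) ⊗ₜ[F] (1 : H) := by
        refine Finset.sum_congr rfl fun i _ => ?_
        calc ∑ q ∈ (rr i).index,
              (r.left i * antipode (R := F) ((rr i).right q))
                ⊗ₜ[F] algebraMap F H (Coalgebra.counit ((rr i).left q))
            = ∑ q ∈ (rr i).index,
              (r.left i * antipode (R := F)
                (Coalgebra.counit (R := F) ((rr i).left q) • (rr i).right q)) ⊗ₜ[F] (1 : H) := by
              refine Finset.sum_congr rfl fun q _ => ?_
              rw [Algebra.algebraMap_eq_smul_one, tmul_smul, map_smul, mul_smul_comm,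
                ← smul_tmul']
          _ = (r.left i * antipode (R := F)
                (∑ q ∈ (rr i).index, Coalgebra.counit (R := F) ((rr i).left q) • (rr i).right q))
                ⊗ₜ[F] (1 : H) := by
              rw [← sum_tmul, ← Finset.mul_sum, ← map_sum]
          _ = (r.left i * antipode (R := F) (r.right i)) ⊗ₜ[F] (1 : H) := by
              rw [sum_counit_smul' (rr i)]
    _ = (∑ i ∈ r.index, r.left i * antipode (R := F) (r.right i)) ⊗ₜ[F] (1 : H) := by
        rw [sum_tmul]
    _ = myone a := by
        rw [HopfAlgebra.sum_mul_antipode_eq_algebraMap_counit r, myone]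
        simp [Algebra.TensorProduct.algebraMap_apply]

lemma comul_antipode
    (hcc : ∀ x : H, (TensorProduct.comm F H H) (Coalgebra.comul x) = Coalgebra.comul x)
    (x : H) :
    Coalgebra.comul (R := F) (antipode (R := F) x)
      = TensorProduct.map (antipode (R := F)) (antipode (R := F)) (Coalgebra.comul x) := by
  have h : (TensorProduct.map (antipode (R := F)) (antipode (R := F))
        ∘ₗ Coalgebra.comul : H →ₗ[F] H ⊗[F] H)
      = (Coalgebra.comul (R := F)) ∘ₗ antipode (R := F) := by
    calc (TensorProduct.map (antipode (R := F)) (antipode (R := F)) ∘ₗ Coalgebra.comul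
          : H →ₗ[F] H ⊗[F] H)
        = myconv myone (TensorProduct.map (antipode (R := F)) (antipode (R := F))
            ∘ₗ Coalgebra.comul) := (myone_conv _).symm
      _ = myconv (myconv ((Coalgebra.comul (R := F)) ∘ₗ antipode (R := F))
            (Coalgebra.comul (R := F) (A := H)))
            (TensorProduct.map (antipode (R := F)) (antipode (R := F)) ∘ₗ Coalgebra.comul) := by
          rw [myconv_comulS_comul]
      _ = myconv ((Coalgebra.comul (R := F)) ∘ₗ antipode (R := F))
            (myconv (Coalgebra.comul (R := F) (A := H))
              (TensorProduct.map (antipode (R := F)) (antipode (R := F))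
                ∘ₗ Coalgebra.comul)) := myconv_assoc _ _ _
      _ = myconv ((Coalgebra.comul (R := F)) ∘ₗ antipode (R := F)) myone := by
          rw [myconv_comul_SS hcc]
      _ = (Coalgebra.comul (R := F)) ∘ₗ antipode (R := F) := myconv_one _
  exact (LinearMap.congr_fun h x).symm


/-- The descendent operation `∘` of a Rota-Baxter system of Hopf algebras is a
coalgebra homomorphism `H ⊗ H → H`: `Δ(a∘b) = (a₁∘b₁) ⊗ (a₂∘b₂)` and
`ε(a∘b) = ε(a)ε(b)`. -/
theorem circ_isCoalgHom
    (hcc : ∀ a : H, (TensorProduct.comm F H H) (Coalgebra.comul a) = Coalgebra.comul a)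
    (B₁ B₂ : H →ₗ[F] H) (hRB : IsRBSystem B₁ B₂) :
    (∀ a b : H, Coalgebra.comul (circ B₁ B₂ a b) =
      TensorProduct.map (circL B₁ B₂) (circL B₁ B₂)
        ((TensorProduct.tensorTensorTensorComm F H H H H)
          (Coalgebra.comul a ⊗ₜ[F] Coalgebra.comul b))) ∧
    (∀ a b : H, Coalgebra.counit (circ B₁ B₂ a b) =
      Coalgebra.counit (R := F) a * Coalgebra.counit (R := F) b) := by
  obtain ⟨hB1c, hB1e, hB2c, hB2e, -, -, -, -⟩ := hRB
  constructor
  · intro a b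
    have r := Coalgebra.Repr.arbitrary F a
    have rl : ∀ i : r.ι, Coalgebra.Repr F (r.left i) (H × H) := fun i => Coalgebra.Repr.arbitrary F _
    have rr : ∀ i : r.ι, Coalgebra.Repr F (r.right i) (H × H) := fun i => Coalgebra.Repr.arbitrary F _
    have rb := Coalgebra.Repr.arbitrary F b
    have hB1 : ∀ x : H, Coalgebra.comul (R := F) (B₁ x)
        = TensorProduct.map B₁ B₁ (Coalgebra.comul x) := fun x => by
      simpa using LinearMap.congr_fun hB1c x
    have hB2 : ∀ x : H, Coalgebra.comul (R := F) (B₂ x)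
        = TensorProduct.map B₂ B₂ (Coalgebra.comul x) := fun x => by
      simpa using LinearMap.congr_fun hB2c x
    have hSB2 : ∀ t : H ⊗[F] H,
        TensorProduct.map ((antipode (R := F)) ∘ₗ B₂) ((antipode (R := F)) ∘ₗ B₂) t
          = TensorProduct.map (antipode (R := F)) (antipode (R := F))
              (TensorProduct.map B₂ B₂ t) := fun t => by
      rw [TensorProduct.map_comp]; rfl
    set Ψ : (H ⊗[F] H) ⊗[F] (H ⊗[F] H) →ₗ[F] H ⊗[F] H :=
      LinearMap.mul' F (H ⊗[F] H) ∘ₗ TensorProduct.map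
        ((LinearMap.mulRight F (Coalgebra.comul (R := F) b)) ∘ₗ TensorProduct.map B₁ B₁)
        (TensorProduct.map ((antipode (R := F)) ∘ₗ B₂) ((antipode (R := F)) ∘ₗ B₂)) with hΨ
    have httt : ⇑(TensorProduct.tensorTensorTensorComm F H H H H)
        = ⇑(TensorProduct.tensorTensorTensorComm F H H H H).toLinearMap := rfl
    have hL : Coalgebra.comul (R := F) (circ B₁ B₂ a b)
        = Ψ (TensorProduct.map (Coalgebra.comul (R := F)) (Coalgebra.comul (R := F))
            (Coalgebra.comul a)) := by
      calc Coalgebra.comul (R := F) (circ B₁ B₂ a b)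
          = ∑ i ∈ r.index, Coalgebra.comul (R := F) (B₁ (r.left i)) * Coalgebra.comul b
              * Coalgebra.comul (R := F) (antipode (R := F) (B₂ (r.right i))) := by
            rw [circ, circL_repr B₁ B₂ b r, map_sum]
            exact Finset.sum_congr rfl fun i _ => by
              rw [Bialgebra.comul_mul, Bialgebra.comul_mul]
        _ = Ψ (TensorProduct.map (Coalgebra.comul (R := F)) (Coalgebra.comul (R := F))
              (Coalgebra.comul a)) := by
            rw [← r.eq]
            simp only [map_sum, map_tmul, hΨ, coe_comp, Function.comp_apply, mulRight_apply,
              mul'_apply]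
            refine Finset.sum_congr rfl fun i _ => ?_
            rw [hSB2, comul_antipode hcc (B₂ (r.right i)), hB1 (r.left i), hB2 (r.right i)]
    have hR : TensorProduct.map (circL B₁ B₂) (circL B₁ B₂)
          ((TensorProduct.tensorTensorTensorComm F H H H H)
            (Coalgebra.comul a ⊗ₜ[F] Coalgebra.comul b))
        = Ψ ((TensorProduct.tensorTensorTensorComm F H H H H)
            (TensorProduct.map (Coalgebra.comul (R := F)) (Coalgebra.comul (R := F))
              (Coalgebra.comul a))) := by
      calc TensorProduct.map (circL B₁ B₂) (circL B₁ B₂)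
            ((TensorProduct.tensorTensorTensorComm F H H H H)
              (Coalgebra.comul a ⊗ₜ[F] Coalgebra.comul b))
          = ∑ i ∈ r.index, ∑ j ∈ rb.index,
              circL B₁ B₂ (r.left i ⊗ₜ[F] rb.left j)
                ⊗ₜ[F] circL B₁ B₂ (r.right i ⊗ₜ[F] rb.right j) := by
            rw [← r.eq, ← rb.eq, sum_tmul, httt]
            simp only [tmul_sum, map_sum, LinearEquiv.coe_coe,
              tensorTensorTensorComm_tmul, map_tmul]
        _ = ∑ i ∈ r.index, ∑ j ∈ rb.index, ∑ p ∈ (rl i).index, ∑ q ∈ (rr i).index,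
              (B₁ ((rl i).left p) * rb.left j * antipode (R := F) (B₂ ((rl i).right p)))
                ⊗ₜ[F] (B₁ ((rr i).left q) * rb.right j
                  * antipode (R := F) (B₂ ((rr i).right q))) := by
            refine Finset.sum_congr rfl fun i _ => Finset.sum_congr rfl fun j _ => ?_
            rw [circL_repr B₁ B₂ _ (rl i), circL_repr B₁ B₂ _ (rr i), sum_tmul]
            exact Finset.sum_congr rfl fun p _ => by rw [tmul_sum]
        _ = ∑ i ∈ r.index, ∑ p ∈ (rl i).index, ∑ q ∈ (rr i).index, ∑ j ∈ rb.index,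
              (B₁ ((rl i).left p) * rb.left j * antipode (R := F) (B₂ ((rl i).right p)))
                ⊗ₜ[F] (B₁ ((rr i).left q) * rb.right j
                  * antipode (R := F) (B₂ ((rr i).right q))) := by
            refine Finset.sum_congr rfl fun i _ => ?_
            rw [Finset.sum_comm]
            exact Finset.sum_congr rfl fun p _ => Finset.sum_comm
        _ = Ψ ((TensorProduct.tensorTensorTensorComm F H H H H)
              (TensorProduct.map (Coalgebra.comul (R := F)) (Coalgebra.comul (R := F))
                (Coalgebra.comul a))) := by
            rw [← r.eq, httt]
            simp only [map_sum, map_tmul]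
            refine Finset.sum_congr rfl fun i _ => ?_
            rw [← (rl i).eq, ← (rr i).eq, sum_tmul]
            simp only [tmul_sum, map_sum, LinearEquiv.coe_coe, tensorTensorTensorComm_tmul,
              map_tmul, hΨ, coe_comp, Function.comp_apply, mulRight_apply, mul'_apply]
            refine Finset.sum_congr rfl fun p _ => Finset.sum_congr rfl fun q _ => ?_
            rw [← rb.eq, Finset.mul_sum, Finset.sum_mul]
            simp only [Algebra.TensorProduct.tmul_mul_tmul]
    rw [hL, hR, keyZ hcc a]
  · intro a b
    have r := Coalgebra.Repr.arbitrary F a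
    rw [circ, circL_repr B₁ B₂ b r, map_sum]
    simp only [Bialgebra.counit_mul]
    calc ∑ i ∈ r.index, Coalgebra.counit (R := F) (B₁ (r.left i)) * Coalgebra.counit (R := F) b
            * Coalgebra.counit (R := F) (antipode (R := F) (B₂ (r.right i)))
        = ∑ i ∈ r.index, (Coalgebra.counit (R := F) (r.left i)
            * Coalgebra.counit (R := F) (r.right i)) * Coalgebra.counit (R := F) b := by
          refine Finset.sum_congr rfl fun i _ => ?_
          have e1 : Coalgebra.counit (R := F) (B₁ (r.left i))
              = Coalgebra.counit (R := F) (r.left i) := by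
            simpa using LinearMap.congr_fun hB1e (r.left i)
          have e2 : Coalgebra.counit (R := F) (B₂ (r.right i))
              = Coalgebra.counit (R := F) (r.right i) := by
            simpa using LinearMap.congr_fun hB2e (r.right i)
          rw [counit_antipode', e1, e2]
          ring
      _ = Coalgebra.counit (R := F) a * Coalgebra.counit (R := F) b := by
          rw [← Finset.sum_mul, sum_counit_mul_counit' r]
end Conv
end
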